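/- Let n ≥ 2 and let A, B ∈ Mₙ(ℂ) be such that A is normal, the operator norm of B on Euclidean ℂⁿ equals 1, and {(x,y,z) ∈ ℂ³ : det(x·A + y·B + z·AB − I) = 0} = {(x,y,z) ∈ ℂ³ : xⁿ + yⁿ + (−1)^{n−1} zⁿ = 1}. Let P₀ be the orthogonal projection onto ker(A − I) and let T be the reduced resolvent of A at the eigenvalue 1. Then: P₀(BT)ᵏBP₀ = 0 for k = 0,…,n−2; P₀(BT)^{n−1}BP₀ = ((−1)^{n−1}/n)·P₀; P₀(ABT)ᵏABP₀ = 0 for k = 0,…,n−2; and P₀(ABT)^{n−1}ABP₀ = (1/n)·P₀. -/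

import Mathlib

open Matrix Complex Polynomial

noncomputable section

/-- binomial expansion mod u^2 -/
lemma one_add_pow_eq {R : Type*} [CommRing R] (u : R) :
    ∀ m : ℕ, ∃ g : R, (1 + u) ^ m = 1 + (m : R) * u + u ^ 2 * g := by
  intro m
  induction m with
  | zero => exact ⟨0, by simp⟩
  | succ m ih =>
    obtain ⟨g, hg⟩ := ih
    refine ⟨g + (m : R) + u * g, ?_⟩
    rw [pow_succ, hg]
    push_cast
    ring

section
open ComplexOrder
lemma conjT_mul_self_zero {m k : ℕ} (K : Matrix (Fin m) (Fin k) ℂ) (h : Kᴴ * K = 0) : K = 0 :=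
  Matrix.conjTranspose_mul_self_eq_zero.mp h
end

lemma my_eval_charpoly {n : ℕ} (M : Matrix (Fin n) (Fin n) ℂ) (w : ℂ) :
    M.charpoly.eval w = (w • (1 : Matrix (Fin n) (Fin n) ℂ) - M).det := by
  rw [Matrix.charpoly, show (Polynomial.eval w : ℂ[X] → ℂ) = (Polynomial.evalRingHom w : ℂ[X] →+* ℂ) from rfl,
    RingHom.map_det]
  congr 1
  ext i j
  by_cases h : i = j
  · subst h; simp [Matrix.charmatrix_apply, Matrix.one_apply]
  · simp [Matrix.charmatrix_apply, Matrix.one_apply, h, Matrix.diagonal_apply_ne _ h]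

lemma coeff_trinom_mul (a b d : ℂ) (m : ℕ) (q : ℂ[X]) (k : ℕ) :
    ((C a + C b * X + C d * X ^ m) * q).coeff k =
      a * q.coeff k + (if 1 ≤ k then b * q.coeff (k - 1) else 0)
        + (if m ≤ k then d * q.coeff (k - m) else 0) := by
  have h1 : (C a + C b * X + C d * X ^ m) * q = C a * q + C b * q * X ^ 1 + C d * q * X ^ m := by
    ring
  rw [h1, coeff_add, coeff_add, coeff_C_mul, coeff_mul_X_pow', coeff_mul_X_pow']
  split_ifs <;> simp [coeff_C_mul]

lemma coeff_one_mul_binom (q : ℂ[X]) (a b : ℂ) :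
    (q * (C a + C b * X)).coeff 1 = q.coeff 1 * a + q.coeff 0 * b := by
  have h1 : q * (C a + C b * X) = C a * q + C b * q * X ^ 1 := by ring
  rw [h1, coeff_add, coeff_C_mul, coeff_mul_X_pow']
  simp [coeff_C_mul, mul_comm]

/-- A matrix whose char poly has root set {z : z^n = c₀} (n distinct values) has
char poly X^n - c₀. -/
lemma detIdentity {n : ℕ} (hn : 2 ≤ n) (Mt : Matrix (Fin n) (Fin n) ℂ) (c₀ : ℂ) (hc₀ : c₀ ≠ 0)
    (hroots : ∀ z : ℂ, z ^ n = c₀ → (z • (1 : Matrix (Fin n) (Fin n) ℂ) - Mt).det = 0) :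
    ∀ w : ℂ, (w • (1 : Matrix (Fin n) (Fin n) ℂ) - Mt).det = w ^ n - c₀ := by
  have hn0 : n ≠ 0 := by omega
  set p := Mt.charpoly with hp
  set q : ℂ[X] := X ^ n - C c₀ with hq
  have hqm : q.Monic := monic_X_pow_sub_C c₀ hn0
  have hqd : q.natDegree = n := natDegree_X_pow_sub_C
  have hpm : p.Monic := Mt.charpoly_monic
  have hpd : p.natDegree = n := by
    rw [hp, Matrix.charpoly_natDegree_eq_dim, Fintype.card_fin]
  have hpq : p = q := by
    by_contra hne
    have hsub : p - q ≠ 0 := sub_ne_zero.mpr hne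
    have hsep : q.Separable :=
      separable_X_pow_sub_C c₀ (by exact_mod_cast (Nat.cast_ne_zero (R := ℂ)).mpr hn0) hc₀
    have hnodup : q.roots.Nodup := Polynomial.nodup_roots hsep
    have hcard : Multiset.card q.roots = n := by
      rw [← hqd]
      exact (Polynomial.splits_iff_card_roots).mp (IsAlgClosed.splits q)
    have hsubset : q.roots ⊆ (p - q).roots := by
      intro z hz
      have hzq : q.IsRoot z := isRoot_of_mem_roots hz
      have hzn : z ^ n = c₀ := by
        have := hzq
        simp only [hq, IsRoot.def, eval_sub, eval_pow, eval_X, eval_C, sub_eq_zero] at this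
        exact this
      have hzp : p.IsRoot z := by
        rw [IsRoot.def, hp, my_eval_charpoly]
        exact hroots z hzn
      rw [mem_roots']
      refine ⟨hsub, ?_⟩
      simp [IsRoot.def, eval_sub, hzp.eq_zero, hzq.eq_zero]
    have hle : q.roots ≤ (p - q).roots := (Multiset.le_iff_subset hnodup).mpr hsubset
    have h1 : n ≤ Multiset.card (p - q).roots := by
      rw [← hcard]; exact Multiset.card_le_card hle
    have h2 : Multiset.card (p - q).roots ≤ (p - q).natDegree := Polynomial.card_roots' _
    have hdeg : (p - q).degree < (n : WithBot ℕ) := by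
      have hd : p.degree = q.degree := by
        rw [degree_eq_natDegree hpm.ne_zero, degree_eq_natDegree hqm.ne_zero, hpd, hqd]
      have := Polynomial.degree_sub_lt hd hpm.ne_zero
        (by rw [hpm.leadingCoeff, hqm.leadingCoeff])
      rwa [degree_eq_natDegree hpm.ne_zero, hpd] at this
    have h3 : (p - q).natDegree < n :=
      (Polynomial.natDegree_lt_iff_degree_lt (n := n) hsub).mpr hdeg
    omega
  intro w
  rw [← my_eval_charpoly, ← hp, hpq, hq]
  simp


theorem keyLemma {n : ℕ} (hn : 2 ≤ n) (A B' P₀ T : Matrix (Fin n) (Fin n) ℂ) (γ : ℂ)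
    (hγ : γ ≠ 0)
    (hdet : ∀ w t : ℂ, 1 + γ * t ^ n ≠ 0 →
      (w • (1 : Matrix (Fin n) (Fin n) ℂ) - A - t • B').det = w ^ n - (1 + γ * t ^ n))
    (hP₀A : P₀ * (A - 1) = 0) (hAP₀ : (A - 1) * P₀ = 0)
    (hP₀idem : P₀ * P₀ = P₀) (hT₁ : T * (A - 1) = 1 - P₀) :
    (∀ k : ℕ, k ≤ n - 2 → P₀ * (B' * T) ^ k * B' * P₀ = 0) ∧
      P₀ * (B' * T) ^ (n - 1) * B' * P₀ = ((-1 : ℂ) ^ (n - 1) * γ / n) • P₀ := by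
  have hn0 : n ≠ 0 := by omega
  have hnC : (n : ℂ) ≠ 0 := Nat.cast_ne_zero.mpr hn0
  set c : ℂ := γ / n with hc
  have hcn : (n : ℂ) * c = γ := by rw [hc]; field_simp
  set M0 : Matrix (Fin n) (Fin n) ℂ := 1 - A with hM0
  set M1 : Matrix (Fin n) (Fin n) ℂ := -B' with hM1
  set Mn : Matrix (Fin n) (Fin n) ℂ := c • (1 : Matrix (Fin n) (Fin n) ℂ) with hMn
  set Mp : Matrix (Fin n) (Fin n) ℂ[X] :=
    Matrix.of (fun i j => C (M0 i j) + C (M1 i j) * X + C (Mn i j) * X ^ n) with hMp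
  -- evaluation of Mp
  have hMpmap : ∀ τ : ℂ, Mp.map (Polynomial.evalRingHom τ) =
      (1 + c * τ ^ n) • (1 : Matrix (Fin n) (Fin n) ℂ) - A - τ • B' := by
    intro τ
    ext i j
    by_cases h : i = j <;>
      simp [hMp, hM0, hM1, hMn, Matrix.map_apply, Matrix.one_apply, h, Matrix.sub_apply,
        Matrix.smul_apply, Matrix.add_apply, smul_eq_mul] <;> ring
  -- determinant of Mp
  have hδ : Mp.det = (1 + C c * X ^ n) ^ n - C γ * X ^ n - 1 := by
    have hinf : Set.Infinite {τ : ℂ | 1 + γ * τ ^ n ≠ 0} := by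
      have hfin : Set.Finite {τ : ℂ | (1 + C γ * X ^ n : ℂ[X]).IsRoot τ} := by
        apply Polynomial.finite_setOf_isRoot
        intro h0
        have := congrArg (fun p => Polynomial.coeff p n) h0
        simp [Polynomial.coeff_one, hn0] at this
        exact hγ this
      have : {τ : ℂ | 1 + γ * τ ^ n ≠ 0} = {τ : ℂ | (1 + C γ * X ^ n : ℂ[X]).IsRoot τ}ᶜ := by
        ext τ; simp [Polynomial.IsRoot.def]
      rw [this]
      exact hfin.infinite_compl
    have hzero : (Mp.det - ((1 + C c * X ^ n) ^ n - C γ * X ^ n - 1)) = 0 := by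
      apply Polynomial.eq_zero_of_infinite_isRoot
      apply Set.Infinite.mono _ hinf
      intro τ hτ
      simp only [Set.mem_setOf_eq] at hτ ⊢
      have h1 : Polynomial.eval τ Mp.det = (1 + c * τ ^ n) ^ n - (1 + γ * τ ^ n) := by
        have h2 : (Polynomial.evalRingHom τ) Mp.det = (Mp.map (Polynomial.evalRingHom τ)).det :=
          RingHom.map_det _ _
        rw [show Polynomial.eval τ Mp.det = (Polynomial.evalRingHom τ) Mp.det from rfl, h2,
          hMpmap τ, hdet _ _ hτ]
      simp [Polynomial.IsRoot.def, h1]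
      ring
    have := sub_eq_zero.mp hzero
    exact this
  -- coefficient vanishing of det Mp up to degree n
  have hδcoeff : ∀ k : ℕ, k ≤ n → Mp.det.coeff k = 0 := by
    intro k hk
    obtain ⟨g, hg⟩ := one_add_pow_eq (C c * X ^ n : ℂ[X]) n
    have hns : ((n : ℂ[X])) * (C c * X ^ n) = C γ * X ^ n := by
      rw [← Polynomial.C_eq_natCast, ← mul_assoc, ← Polynomial.C_mul, hcn]
    have hMd : Mp.det = (C c * X ^ n) ^ 2 * g := by
      rw [hδ, hg, hns]; ring
    have hsq : (C c * X ^ n) ^ 2 * g = (C (c ^ 2) * g) * X ^ (2 * n) := by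
      rw [mul_pow, ← Polynomial.C_pow, ← pow_mul]; ring
    rw [hMd, hsq, Polynomial.coeff_mul_X_pow']
    have : ¬ (2 * n ≤ k) := by omega
    simp [this]
  set V := Mp.adjugate with hV
  have hMV : Mp * V = Mp.det • 1 := Matrix.mul_adjugate Mp
  set Vc : ℕ → Matrix (Fin n) (Fin n) ℂ :=
    fun k => Matrix.of (fun i j => (V i j).coeff k) with hVc
  -- coefficient extraction from Mp * V = det • 1
  have hcoe : ∀ k : ℕ, k ≤ n →
      M0 * Vc k + (if 1 ≤ k then M1 * Vc (k - 1) else 0)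
        + (if n ≤ k then Mn * Vc (k - n) else 0) = 0 := by
    intro k hk
    ext i j
    have hentry : ((Mp * V) i j).coeff k = ((Mp.det • (1 : Matrix (Fin n) (Fin n) ℂ[X])) i j).coeff k := by
      rw [hMV]
    rw [Matrix.mul_apply] at hentry
    rw [Polynomial.finset_sum_coeff] at hentry
    have hterm : ∀ l, ((Mp i l) * (V l j)).coeff k
        = M0 i l * (Vc k) l j + (if 1 ≤ k then M1 i l * (Vc (k - 1)) l j else 0)
          + (if n ≤ k then Mn i l * (Vc (k - n)) l j else 0) := by
      intro l
      rw [show Mp i l = C (M0 i l) + C (M1 i l) * X + C (Mn i l) * X ^ n from rfl,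
        coeff_trinom_mul]
      rfl
    rw [Finset.sum_congr rfl (fun l _ => hterm l)] at hentry
    rw [Finset.sum_add_distrib, Finset.sum_add_distrib] at hentry
    have hrhs : ((Mp.det • (1 : Matrix (Fin n) (Fin n) ℂ[X])) i j).coeff k = 0 := by
      rw [Matrix.smul_apply, Matrix.one_apply]
      by_cases h : i = j <;> simp [h, smul_eq_mul, hδcoeff k hk]
    rw [hrhs] at hentry
    simp only [Matrix.add_apply, Matrix.zero_apply, Matrix.mul_apply]
    split_ifs at hentry ⊢ <;>
      simpa [Finset.sum_add_distrib, Finset.sum_const_zero, Matrix.mul_apply] using hentry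
  -- the three equations
  have hE0 : M0 * Vc 0 = 0 := by
    have := hcoe 0 (by omega)
    simp only [show ¬(1 ≤ 0) from by omega, show ¬(n ≤ 0) from by omega, if_neg,
      if_false, add_zero] at this
    simpa using this
  have hEk : ∀ k : ℕ, 1 ≤ k → k ≤ n - 1 → M0 * Vc k = B' * Vc (k - 1) := by
    intro k h1 h2
    have := hcoe k (by omega)
    rw [if_pos h1, if_neg (show ¬ (n ≤ k) from by omega)] at this
    rw [add_zero, hM1] at this
    have h3 : M0 * Vc k + -(B' * Vc (k-1)) = 0 := by
      rw [← this]; congr 1; simp [Matrix.neg_mul]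
    linear_combination (norm := noncomm_ring) h3
  have hEn : M0 * Vc n + M1 * Vc (n - 1) + c • Vc 0 = 0 := by
    have := hcoe n (by omega)
    rw [if_pos (show 1 ≤ n from by omega), if_pos (le_refl n), Nat.sub_self] at this
    rw [hMn] at this
    convert this using 2
    simp [Matrix.smul_mul, Matrix.one_mul]
  -- identification of Vc 0 with the adjugate of M0
  have hmap0 : Mp.map (Polynomial.evalRingHom 0) = M0 := by
    rw [hMpmap 0, zero_pow hn0, hM0]
    simp
  have hV0 : Vc 0 = M0.adjugate := by
    ext i j
    show (V i j).coeff 0 = _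
    rw [Polynomial.coeff_zero_eq_eval_zero]
    have : M0.adjugate = (Mp.map (Polynomial.evalRingHom 0)).adjugate := by rw [hmap0]
    rw [this, show Mp.map ⇑(Polynomial.evalRingHom 0) = (Polynomial.evalRingHom 0).mapMatrix Mp
      from rfl, ← RingHom.map_adjugate]
    rfl
  set J := M0.adjugate with hJdef
  -- second adjugate gadget : J * P₀ = n • P₀
  have hJP : J * P₀ = (n : ℂ) • P₀ := by
    set Qp : Matrix (Fin n) (Fin n) ℂ[X] :=
      Matrix.of (fun i j => C (M0 i j) + C ((1 : Matrix (Fin n) (Fin n) ℂ) i j) * X) with hQp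
    have hQmap : ∀ τ : ℂ, Qp.map (Polynomial.evalRingHom τ) =
        (1 + τ) • (1 : Matrix (Fin n) (Fin n) ℂ) - A - (0:ℂ) • B' := by
      intro τ
      ext i j
      by_cases h : i = j <;>
        simp [hQp, hM0, Matrix.map_apply, Matrix.one_apply, h, Matrix.sub_apply,
          Matrix.smul_apply, Matrix.add_apply, smul_eq_mul] <;> ring
    have hdetQ : Qp.det = (1 + X) ^ n - 1 := by
      apply Polynomial.funext
      intro τ
      have h2 : (Polynomial.evalRingHom τ) Qp.det = (Qp.map (Polynomial.evalRingHom τ)).det :=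
        RingHom.map_det _ _
      have h3 : (1:ℂ) + γ * (0:ℂ) ^ n ≠ 0 := by simp [zero_pow hn0]
      rw [show Polynomial.eval τ Qp.det = (Polynomial.evalRingHom τ) Qp.det from rfl, h2,
        hQmap τ, hdet _ _ h3]
      simp [zero_pow hn0]
    have hNQ : Qp.adjugate * Qp = Qp.det • 1 := Matrix.adjugate_mul Qp
    set N0 : Matrix (Fin n) (Fin n) ℂ :=
      Matrix.of (fun i j => (Qp.adjugate i j).coeff 0) with hN0
    set N1 : Matrix (Fin n) (Fin n) ℂ :=
      Matrix.of (fun i j => (Qp.adjugate i j).coeff 1) with hN1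
    have hcoeQ : N1 * M0 + N0 = (n : ℂ) • 1 := by
      ext i j
      have hentry : ((Qp.adjugate * Qp) i j).coeff 1
          = ((Qp.det • (1 : Matrix (Fin n) (Fin n) ℂ[X])) i j).coeff 1 := by rw [hNQ]
      rw [Matrix.mul_apply, Polynomial.finset_sum_coeff] at hentry
      have hterm : ∀ l, ((Qp.adjugate i l) * (Qp l j)).coeff 1
          = N1 i l * M0 l j + N0 i l * (1 : Matrix (Fin n) (Fin n) ℂ) l j := by
        intro l
        rw [show Qp l j = C (M0 l j) + C ((1 : Matrix (Fin n) (Fin n) ℂ) l j) * X from rfl,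
          coeff_one_mul_binom]
        rfl
      rw [Finset.sum_congr rfl (fun l _ => hterm l), Finset.sum_add_distrib] at hentry
      have hrhs : ((Qp.det • (1 : Matrix (Fin n) (Fin n) ℂ[X])) i j).coeff 1
          = ((n : ℂ) • (1 : Matrix (Fin n) (Fin n) ℂ)) i j := by
        rw [Matrix.smul_apply, Matrix.one_apply]
        have hco : Qp.det.coeff 1 = (n : ℂ) := by
          obtain ⟨g, hg⟩ := one_add_pow_eq (X : ℂ[X]) n
          rw [hdetQ, hg]
          rw [Polynomial.coeff_sub, Polynomial.coeff_add, Polynomial.coeff_add]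
          rw [show (X:ℂ[X])^2 * g = g * X^2 from mul_comm _ _, Polynomial.coeff_mul_X_pow']
          rw [← Polynomial.C_eq_natCast, Polynomial.coeff_C_mul]
          simp [Polynomial.coeff_one]
        by_cases h : i = j <;> simp [h, smul_eq_mul, hco]
      rw [hrhs] at hentry
      have h4 : ∑ x, N0 i x * (1 : Matrix (Fin n) (Fin n) ℂ) x j = N0 i j := by
        simp [Matrix.one_apply, mul_ite, mul_one, mul_zero]
      rw [h4] at hentry
      simp only [Matrix.add_apply, Matrix.mul_apply]
      exact hentry
    have hQmap0 : Qp.map (Polynomial.evalRingHom 0) = M0 := by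
      rw [hQmap 0, hM0]; simp
    have hN0J : N0 = J := by
      ext i j
      show (Qp.adjugate i j).coeff 0 = _
      rw [Polynomial.coeff_zero_eq_eval_zero]
      have : M0.adjugate = (Qp.map (Polynomial.evalRingHom 0)).adjugate := by rw [hQmap0]
      rw [hJdef, this, show Qp.map ⇑(Polynomial.evalRingHom 0) = (Polynomial.evalRingHom 0).mapMatrix Qp
        from rfl, ← RingHom.map_adjugate]
      rfl
    have := congrArg (fun M => M * P₀) hcoeQ
    rw [Matrix.add_mul, Matrix.smul_mul, Matrix.one_mul] at this
    rw [Matrix.mul_assoc, show M0 * P₀ = 0 from ?_, Matrix.mul_zero, zero_add, hN0J] at this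
    · exact this
    · rw [hM0, (neg_sub A (1 : Matrix (Fin n) (Fin n) ℂ)).symm, Matrix.neg_mul,
        hAP₀, neg_zero]
  -- P₀ kills M0 on the left
  have hPM0 : P₀ * M0 = 0 := by
    rw [hM0, (neg_sub A (1 : Matrix (Fin n) (Fin n) ℂ)).symm, Matrix.mul_neg, hP₀A, neg_zero]
  -- basic consequences
  have hPBV : ∀ m : ℕ, m ≤ n - 2 → P₀ * B' * Vc m = 0 := by
    intro m hm
    have h := hEk (m + 1) (by omega) (by omega)
    rw [Nat.add_sub_cancel] at h
    have := congrArg (fun M => P₀ * M) h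
    rw [← Matrix.mul_assoc, ← Matrix.mul_assoc, hPM0, Matrix.zero_mul] at this
    exact this.symm
  have hPBV1 : P₀ * B' * Vc (n - 1) = c • (P₀ * Vc 0) := by
    have h1 : P₀ * (M0 * Vc n) + P₀ * (M1 * Vc (n - 1)) + P₀ * (c • Vc 0) = 0 := by
      rw [← Matrix.mul_add, ← Matrix.mul_add, hEn, Matrix.mul_zero]
    rw [← Matrix.mul_assoc, hPM0, Matrix.zero_mul, zero_add] at h1
    rw [hM1, Matrix.neg_mul, Matrix.mul_neg, Matrix.mul_smul] at h1
    rw [Matrix.mul_assoc]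
    exact neg_add_eq_zero.mp h1
  -- recursion for Vc
  have hVrec : ∀ k : ℕ, 1 ≤ k → k ≤ n - 1 → Vc k = P₀ * Vc k - T * (B' * Vc (k - 1)) := by
    intro k h1 h2
    have h := hEk k h1 h2
    have h3 : T * (M0 * Vc k) = T * (B' * Vc (k - 1)) := by rw [h]
    rw [← Matrix.mul_assoc] at h3
    have h4 : T * M0 = P₀ - 1 := by
      rw [hM0, (neg_sub A (1 : Matrix (Fin n) (Fin n) ℂ)).symm, Matrix.mul_neg, hT₁]
      rw [neg_sub]
    rw [h4, Matrix.sub_mul, Matrix.one_mul] at h3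
    have h5 : Vc k = P₀ * Vc k - T * (B' * Vc (k - 1)) := by
      rw [← h3]; abel
    exact h5
  -- main chain lemma
  have chain : ∀ m j : ℕ, m + j ≤ n - 1 →
      (∀ i : ℕ, i < m + j → P₀ * (B' * T) ^ i * B' * P₀ = 0) →
      P₀ * (B' * T) ^ j * B' * Vc m
        = ((-1 : ℂ) ^ m) • (P₀ * (B' * T) ^ (j + m) * B' * Vc 0) := by
    intro m
    induction m with
    | zero => intro j _ _; simp
    | succ m ih =>
      intro j hle hZ
      have h1 : Vc (m + 1) = P₀ * Vc (m + 1) - T * (B' * Vc m) :=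
        hVrec (m + 1) (by omega) (by omega)
      rw [h1, Matrix.mul_sub]
      have e1 : P₀ * (B' * T) ^ j * B' * (P₀ * Vc (m + 1)) = 0 := by
        calc P₀ * (B' * T) ^ j * B' * (P₀ * Vc (m + 1))
            = P₀ * (B' * T) ^ j * B' * (P₀ * (P₀ * Vc (m + 1))) := by
              rw [← Matrix.mul_assoc P₀ P₀, hP₀idem]
          _ = (P₀ * (B' * T) ^ j * B' * P₀) * (P₀ * Vc (m + 1)) := by
              simp only [Matrix.mul_assoc]
          _ = 0 := by rw [hZ j (by omega), Matrix.zero_mul]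
      have e2 : P₀ * (B' * T) ^ j * B' * (T * (B' * Vc m))
          = P₀ * (B' * T) ^ (j + 1) * B' * Vc m := by
        rw [pow_succ]
        simp only [Matrix.mul_assoc]
      have e3 := ih (j + 1) (by omega) (fun i hi => hZ i (by omega))
      rw [e1, e2, e3, zero_sub]
      rw [show j + 1 + m = j + (m + 1) from by omega, pow_succ]
      rw [← neg_smul]
      ring_nf
  -- Part 1 : vanishing up to n-2
  have part1 : ∀ k : ℕ, k ≤ n - 2 → P₀ * (B' * T) ^ k * B' * P₀ = 0 := by
    intro k
    induction k using Nat.strong_induction_on with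
    | _ k ih =>
      intro hk
      have hch := chain k 0 (by omega) (fun i hi => ih i hi (by omega))
      simp only [pow_zero, Matrix.mul_one, zero_add] at hch
      rw [hPBV k hk] at hch
      have h0 : P₀ * (B' * T) ^ k * B' * Vc 0 = 0 := by
        have hne : ((-1 : ℂ) ^ k) ≠ 0 := pow_ne_zero _ (by norm_num)
        exact (smul_eq_zero.mp hch.symm).resolve_left hne
      rw [hV0] at h0
      have h1 := congrArg (fun M => M * P₀) h0
      simp only [Matrix.zero_mul] at h1
      rw [Matrix.mul_assoc, hJP, Matrix.mul_smul] at h1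
      exact (smul_eq_zero.mp h1).resolve_left hnC
  refine ⟨part1, ?_⟩
  -- Part 2
  have hch := chain (n - 1) 0 (by omega) (fun i hi => part1 i (by omega))
  simp only [pow_zero, Matrix.mul_one, zero_add] at hch
  rw [hPBV1, hV0] at hch
  have h1 := congrArg (fun M => M * P₀) hch
  simp only [Matrix.smul_mul] at h1
  rw [Matrix.mul_assoc, Matrix.mul_assoc, hJP, Matrix.mul_smul, Matrix.mul_smul, hP₀idem] at h1
  rw [Matrix.mul_assoc (P₀ * (B' * T) ^ (n - 1)) B'] at h1
  rw [← Matrix.mul_assoc (P₀ * (B' * T) ^ (n - 1)) B' P₀] at h1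
  rw [smul_smul, smul_smul] at h1
  have hne : ((-1:ℂ) ^ (n-1) * n) ≠ 0 := mul_ne_zero (pow_ne_zero _ (by norm_num)) hnC
  have h2 := congrArg (fun M => (((-1:ℂ) ^ (n-1) * n)⁻¹) • M) h1
  simp only [smul_smul] at h2
  rw [inv_mul_cancel₀ hne, one_smul] at h2
  rw [← h2]
  congr 1
  have ha : ((-1:ℂ) ^ (n-1))⁻¹ = (-1:ℂ) ^ (n-1) := by
    rw [← inv_pow, inv_neg, inv_one]
  rw [mul_inv, ha, hc]
  field_simp
theorem stmt_11 (n : ℕ) (hn : 2 ≤ n)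
    (A B : Matrix (Fin n) (Fin n) ℂ)
    (hA : A * Aᴴ = Aᴴ * A)
    (hB : ‖Matrix.toEuclideanCLM (𝕜 := ℂ) B‖ = 1)
    (hspec : {p : ℂ × ℂ × ℂ |
        (p.1 • A + p.2.1 • B + p.2.2 • (A * B) - 1).det = 0} =
      {p : ℂ × ℂ × ℂ |
        p.1 ^ n + p.2.1 ^ n + (-1 : ℂ) ^ (n - 1) * p.2.2 ^ n = 1})
    -- `P₀` is the orthogonal projection onto `ker (A - 1)`
    (P₀ : Matrix (Fin n) (Fin n) ℂ)
    (hP₀herm : P₀ᴴ = P₀) (hP₀idem : P₀ * P₀ = P₀)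
    (hP₀range : (A - 1) * P₀ = 0)
    (hP₀ker : ∀ v : Fin n → ℂ, (A - 1).mulVec v = 0 → P₀.mulVec v = v)
    -- `T` is the reduced resolvent of `A` at the eigenvalue `1`
    (T : Matrix (Fin n) (Fin n) ℂ)
    (hTP₀ : T * P₀ = 0) (hP₀T : P₀ * T = 0)
    (hT₁ : T * (A - 1) = 1 - P₀) (hT₂ : (A - 1) * T = 1 - P₀) :
    (∀ k : ℕ, k ≤ n - 2 → P₀ * (B * T) ^ k * B * P₀ = 0) ∧
    P₀ * (B * T) ^ (n - 1) * B * P₀ = ((-1 : ℂ) ^ (n - 1) / n) • P₀ ∧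
    (∀ k : ℕ, k ≤ n - 2 → P₀ * (A * B * T) ^ k * (A * B) * P₀ = 0) ∧
    P₀ * (A * B * T) ^ (n - 1) * (A * B) * P₀ = ((1 : ℂ) / n) • P₀ := by
  have hn0 : n ≠ 0 := by omega
  -- membership criterion from the spectral hypothesis
  have hmem : ∀ p : ℂ × ℂ × ℂ,
      (p.1 • A + p.2.1 • B + p.2.2 • (A * B) - 1).det = 0 ↔
        p.1 ^ n + p.2.1 ^ n + (-1 : ℂ) ^ (n - 1) * p.2.2 ^ n = 1 := by
    intro p
    have := Set.ext_iff.mp hspec p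
    simpa using this
  -- normality gives the two-sided annihilation
  have hP₀A : P₀ * (A - 1) = 0 := by
    have hKexp : ((Aᴴ - 1) * P₀)ᴴ = P₀ * (A - 1) := by
      rw [Matrix.conjTranspose_mul, Matrix.conjTranspose_sub, Matrix.conjTranspose_conjTranspose,
        Matrix.conjTranspose_one, hP₀herm]
    have hNcomm : (A - 1) * (Aᴴ - 1) = (Aᴴ - 1) * (A - 1) := by
      calc (A - 1) * (Aᴴ - 1) = A * Aᴴ - A - Aᴴ + 1 := by noncomm_ring
        _ = Aᴴ * A - A - Aᴴ + 1 := by rw [hA]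
        _ = (Aᴴ - 1) * (A - 1) := by noncomm_ring
    have hK : ((Aᴴ - 1) * P₀)ᴴ * ((Aᴴ - 1) * P₀) = 0 := by
      rw [hKexp]
      calc P₀ * (A - 1) * ((Aᴴ - 1) * P₀)
          = P₀ * ((A - 1) * (Aᴴ - 1)) * P₀ := by simp only [Matrix.mul_assoc]
        _ = P₀ * ((Aᴴ - 1) * (A - 1)) * P₀ := by rw [hNcomm]
        _ = (P₀ * (Aᴴ - 1)) * ((A - 1) * P₀) := by simp only [Matrix.mul_assoc]
        _ = 0 := by rw [hP₀range, Matrix.mul_zero]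
    have h0 : (Aᴴ - 1) * P₀ = 0 := conjT_mul_self_zero _ hK
    rw [← hKexp, h0, Matrix.conjTranspose_zero]
  -- determinant identity for B (γ = 1)
  have hdetB : ∀ w t : ℂ, 1 + (1:ℂ) * t ^ n ≠ 0 →
      (w • (1 : Matrix (Fin n) (Fin n) ℂ) - A - t • B).det = w ^ n - (1 + 1 * t ^ n) := by
    intro w t ht
    have hroots : ∀ z : ℂ, z ^ n = 1 + 1 * t ^ n →
        (z • (1 : Matrix (Fin n) (Fin n) ℂ) - (A + t • B)).det = 0 := by
      intro z hz
      have hz0 : z ≠ 0 := by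
        intro h0; rw [h0, zero_pow hn0] at hz; exact ht hz.symm
      have hfac : z • (1 : Matrix (Fin n) (Fin n) ℂ) - (A + t • B)
          = (-z) • (z⁻¹ • A + (t * z⁻¹) • B + (0:ℂ) • (A * B) - 1) := by
        match_scalars <;> field_simp <;> ring
      have hmem2 : (z⁻¹ • A + (t * z⁻¹) • B + (0:ℂ) • (A * B) - 1).det = 0 := by
        apply (hmem (z⁻¹, t * z⁻¹, 0)).mpr
        simp only
        rw [zero_pow hn0, mul_zero, add_zero, mul_pow, inv_pow]
        field_simp
        linear_combination -hz
      rw [hfac, Matrix.det_smul, Fintype.card_fin, hmem2]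
      simp
    have := detIdentity hn (A + t • B) (1 + 1 * t ^ n) ht hroots w
    rw [sub_sub]
    exact this
  -- determinant identity for A*B (γ = (-1)^(n-1))
  have hdetAB : ∀ w t : ℂ, 1 + ((-1:ℂ) ^ (n-1)) * t ^ n ≠ 0 →
      (w • (1 : Matrix (Fin n) (Fin n) ℂ) - A - t • (A * B)).det
        = w ^ n - (1 + ((-1:ℂ) ^ (n-1)) * t ^ n) := by
    intro w t ht
    have hroots : ∀ z : ℂ, z ^ n = 1 + ((-1:ℂ) ^ (n-1)) * t ^ n →
        (z • (1 : Matrix (Fin n) (Fin n) ℂ) - (A + t • (A * B))).det = 0 := by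
      intro z hz
      have hz0 : z ≠ 0 := by
        intro h0; rw [h0, zero_pow hn0] at hz; exact ht hz.symm
      have hfac : z • (1 : Matrix (Fin n) (Fin n) ℂ) - (A + t • (A * B))
          = (-z) • (z⁻¹ • A + (0:ℂ) • B + (t * z⁻¹) • (A * B) - 1) := by
        match_scalars <;> field_simp <;> ring
      have hmem2 : (z⁻¹ • A + (0:ℂ) • B + (t * z⁻¹) • (A * B) - 1).det = 0 := by
        apply (hmem (z⁻¹, 0, t * z⁻¹)).mpr
        simp only
        rw [zero_pow hn0, mul_pow, inv_pow]
        field_simp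
        linear_combination -hz
      rw [hfac, Matrix.det_smul, Fintype.card_fin, hmem2]
      simp
    have := detIdentity hn (A + t • (A * B)) (1 + ((-1:ℂ) ^ (n-1)) * t ^ n) ht hroots w
    rw [sub_sub]
    exact this
  obtain ⟨g1, g2⟩ := keyLemma hn A B P₀ T 1 one_ne_zero hdetB hP₀A hP₀range hP₀idem hT₁
  obtain ⟨g3, g4⟩ := keyLemma hn A (A * B) P₀ T ((-1:ℂ) ^ (n-1))
    (pow_ne_zero _ (by norm_num)) hdetAB hP₀A hP₀range hP₀idem hT₁
  have hsq : ((-1:ℂ) ^ (n-1)) * ((-1:ℂ) ^ (n-1)) = 1 := by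
    rw [← pow_add, ← two_mul, pow_mul]; norm_num
  refine ⟨g1, ?_, g3, ?_⟩
  · rw [g2, mul_one]
  · rw [g4, hsq]

end
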